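/- For N_S > 0, N_B > 0, η ∈ (0,1), the TMSV QFI I(N_S) = 4[N_S(N_S+1)(1-η²) + η²(N_S + N_B + 2N_S N_B)] / ((1-η²)[1 + (1-η²)(N_S + N_B + 2N_S N_B)]) satisfies: (a) I(N_S) - 4N_S/((1-η²)(1+2N_B)) → C(η, N_B) as N_S → ∞ for some finite constant C; (b) I(0) = 4η² N_B / ((1-η²)(1 + N_B(1-η²))) > 0. -/

import Mathlib

noncomputable def Itmsv (NB η NS : ℝ) : ℝ :=
  4*(NS*(NS+1)*(1-η^2) + η^2*(NS + NB + 2*NS*NB)) /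
    ((1-η^2)*(1 + (1-η^2)*(NS + NB + 2*NS*NB)))

theorem tmsv_asymptotics_and_shadow (NB η : ℝ) (hNB : 0 < NB)
    (hη0 : 0 < η) (hη1 : η < 1) :
    (∃ C : ℝ, Filter.Tendsto
      (fun NS => Itmsv NB η NS - 4*NS/((1-η^2)*(1+2*NB))) Filter.atTop (nhds C)) ∧
    Itmsv NB η 0 = 4*η^2*NB / ((1-η^2)*(1 + NB*(1-η^2))) ∧
    0 < Itmsv NB η 0 := by
  have ha : (0:ℝ) < 1 - η^2 := by nlinarith
  have hb : (0:ℝ) < 1 + 2*NB := by linarith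
  set a := 1 - η^2 with ha_def
  set b := 1 + 2*NB with hb_def
  have ha' : a ≠ 0 := ne_of_gt ha
  have hb' : b ≠ 0 := ne_of_gt hb
  refine ⟨⟨(4*(b*(a+η^2*b) - 1 - a*NB))/(a^2*b^2), ?_⟩, ?_, ?_⟩
  · -- asymptotics
    set c1 : ℝ := 4*(b*(a+η^2*b) - 1 - a*NB) with hc1
    set c0 : ℝ := 4*b*η^2*NB with hc0
    set d1 : ℝ := a^2*b^2 with hd1
    set d0 : ℝ := a*b*(1+a*NB) with hd0
    have hd1pos : 0 < d1 := by positivity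
    have htend : Filter.Tendsto (fun NS : ℝ => (c1 + c0/NS)/(d1 + d0/NS))
        Filter.atTop (nhds (c1/d1)) := by
      have h1 : Filter.Tendsto (fun NS : ℝ => c0/NS) Filter.atTop (nhds 0) :=
        Filter.Tendsto.div_atTop tendsto_const_nhds Filter.tendsto_id
      have h2 : Filter.Tendsto (fun NS : ℝ => d0/NS) Filter.atTop (nhds 0) :=
        Filter.Tendsto.div_atTop tendsto_const_nhds Filter.tendsto_id
      have hn : Filter.Tendsto (fun NS : ℝ => c1 + c0/NS) Filter.atTop (nhds (c1+0)) :=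
        tendsto_const_nhds.add h1
      have hd : Filter.Tendsto (fun NS : ℝ => d1 + d0/NS) Filter.atTop (nhds (d1+0)) :=
        tendsto_const_nhds.add h2
      have := hn.div hd (by simpa using ne_of_gt hd1pos)
      rw [add_zero, add_zero] at this
      exact this
    have hC : c1/d1 = (4*(b*(a+η^2*b) - 1 - a*NB))/(a^2*b^2) := rfl
    rw [← hC]
    refine htend.congr' ?_
    filter_upwards [Filter.eventually_gt_atTop (0:ℝ)] with NS hNS
    have hNS' : NS ≠ 0 := ne_of_gt hNS
    have hsum : (0:ℝ) < NS + NB + 2*NS*NB := by positivity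
    have hden : (0:ℝ) < 1 + a*(NS + NB + 2*NS*NB) := by nlinarith [mul_pos ha hsum]
    have hden' : (1:ℝ) + a*(NS + NB + 2*NS*NB) ≠ 0 := ne_of_gt hden
    show (c1 + c0/NS)/(d1 + d0/NS) = Itmsv NB η NS - 4*NS/(a*b)
    unfold Itmsv
    rw [← ha_def]
    rw [hc1, hc0, hd1, hd0, hb_def]
    field_simp
    ring
  · -- value at 0
    unfold Itmsv
    rw [← ha_def]
    norm_num
    ring_nf
  · -- positivity
    unfold Itmsv
    rw [← ha_def]
    norm_num
    apply div_pos
    · positivity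
    · have : 0 < 1 + a*NB := by positivity
      positivity
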